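/- Let q ≥ 0 be a real number and let ρ be a real number with 0 ≤ ρ < 1. Then ∫₀^π sin^{2q}(ξ) / (1 + ρ² − 2ρ·cos ξ)^{q+1} dξ = (1/(1 − ρ²)) · √π · Γ(q + 1/2) / Γ(q + 1). -/

import Mathlib

open Real MeasureTheory

open Set intervalIntegral in
private lemma realBeta {a b : ℝ} (ha : 0 < a) (hb : 0 < b) :
    ∫ x in (0:ℝ)..1, x ^ (a-1) * (1-x) ^ (b-1)
      = Real.Gamma a * Real.Gamma b / Real.Gamma (a+b) := by
  have hB : Complex.betaIntegral a b
      = ((∫ x in (0:ℝ)..1, x ^ (a-1) * (1-x) ^ (b-1) : ℝ) : ℂ) := by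
    rw [Complex.betaIntegral, ← intervalIntegral.integral_ofReal]
    apply intervalIntegral.integral_congr
    intro x hx
    rw [Set.uIcc_of_le (by norm_num : (0:ℝ) ≤ 1)] at hx
    obtain ⟨hx0, hx1⟩ := hx
    push_cast
    rw [Complex.ofReal_cpow hx0, Complex.ofReal_cpow (by linarith)]
    push_cast
    ring
  have key := Complex.Gamma_mul_Gamma_eq_betaIntegral
    (s := (a:ℂ)) (t := (b:ℂ)) (by simpa using ha) (by simpa using hb)
  rw [hB, ← Complex.ofReal_add, Complex.Gamma_ofReal, Complex.Gamma_ofReal,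
    Complex.Gamma_ofReal] at key
  have key' : Real.Gamma a * Real.Gamma b
      = Real.Gamma (a+b) * ∫ x in (0:ℝ)..1, x ^ (a-1) * (1-x) ^ (b-1) := by
    exact_mod_cast key
  have hG : Real.Gamma (a+b) ≠ 0 := (Real.Gamma_pos_of_pos (by linarith)).ne'
  field_simp
  linarith [key']

open Set intervalIntegral in
private lemma wallis_rpow {q : ℝ} (hq : 0 ≤ q) :
    ∫ ξ in (0:ℝ)..π, Real.sin ξ ^ (2*q)
      = Real.sqrt π * Real.Gamma (q+1/2) / Real.Gamma (q+1) := by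
  have h45 : (4:ℝ)^q = (2:ℝ)^(2*q) := by
    have h24 : (2:ℝ)^((2:ℕ):ℝ) = 4 := by
      rw [Real.rpow_natCast]; norm_num
    rw [show (2:ℝ)*q = ((2:ℕ):ℝ)*q by norm_num,
      Real.rpow_mul (by norm_num : (0:ℝ) ≤ 2), h24]
  set f : ℝ → ℝ := fun ξ => Real.sin (ξ/2)^2 with hf
  have hcont : Continuous f := by fun_prop
  have hf' : ∀ ξ ∈ Ioo (0:ℝ) π, HasDerivWithinAt f (Real.sin ξ / 2) (Ioo (0:ℝ) π) ξ := by
    intro ξ _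
    have h := ((Real.hasDerivAt_sin (ξ/2)).comp ξ ((hasDerivAt_id ξ).div_const 2)).pow 2
    have hsin : Real.sin ξ = 2 * Real.sin (ξ/2) * Real.cos (ξ/2) := by
      conv_lhs => rw [show ξ = 2*(ξ/2) by ring]
      rw [Real.sin_two_mul]
    refine HasDerivAt.hasDerivWithinAt ?_
    refine h.congr_deriv ?_
    simp only [Function.comp, id]
    rw [hsin]
    push_cast
    ring
  have hinj : InjOn f (Ioo (0:ℝ) π) := by
    intro a ha b hb h
    have ha2 : a/2 ∈ Icc (-(π/2)) (π/2) := by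
      constructor <;> [linarith [ha.1, Real.pi_pos]; linarith [ha.2]]
    have hb2 : b/2 ∈ Icc (-(π/2)) (π/2) := by
      constructor <;> [linarith [hb.1, Real.pi_pos]; linarith [hb.2]]
    have hsa : 0 ≤ Real.sin (a/2) := Real.sin_nonneg_of_nonneg_of_le_pi (by linarith [ha.1]) (by linarith [ha.2, Real.pi_pos])
    have hsb : 0 ≤ Real.sin (b/2) := Real.sin_nonneg_of_nonneg_of_le_pi (by linarith [hb.1]) (by linarith [hb.2, Real.pi_pos])
    have : Real.sin (a/2) = Real.sin (b/2) := by
      simp only [hf] at h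
      nlinarith [h]
    have := Real.injOn_sin ha2 hb2 this
    linarith
  have himg : f '' Ioo (0:ℝ) π = Ioo (0:ℝ) 1 := by
    apply Subset.antisymm
    · rintro x ⟨ξ, hξ, rfl⟩
      have h1 : 0 < Real.sin (ξ/2) := Real.sin_pos_of_pos_of_lt_pi (by linarith [hξ.1]) (by linarith [hξ.2, Real.pi_pos])
      have h2 : 0 < Real.cos (ξ/2) := Real.cos_pos_of_mem_Ioo ⟨by linarith [hξ.1, Real.pi_pos], by linarith [hξ.2]⟩
      have h3 := Real.sin_sq_add_cos_sq (ξ/2)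
      refine ⟨?_, ?_⟩ <;> simp only [hf] <;> nlinarith
    · have h0 : f 0 = 0 := by simp [hf]
      have h1 : f π = 1 := by simp [hf]
      have := intermediate_value_Ioo (le_of_lt Real.pi_pos) hcont.continuousOn
      rw [h0, h1] at this
      exact this
  have hsub := MeasureTheory.integral_image_eq_integral_abs_deriv_smul
    measurableSet_Ioo hf' hinj (fun x => x^(q-1/2)*(1-x)^(q-1/2))
  rw [himg] at hsub
  have hcongr : ∀ ξ ∈ Ioo (0:ℝ) π,
      |Real.sin ξ / 2| • (f ξ ^ (q-1/2) * (1 - f ξ) ^ (q-1/2))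
        = Real.sin ξ ^ (2*q) / (4:ℝ)^q := by
    intro ξ hξ
    have h1 : 0 < Real.sin (ξ/2) := Real.sin_pos_of_pos_of_lt_pi (by linarith [hξ.1]) (by linarith [hξ.2, Real.pi_pos])
    have h2 : 0 < Real.cos (ξ/2) := Real.cos_pos_of_mem_Ioo ⟨by linarith [hξ.1, Real.pi_pos], by linarith [hξ.2]⟩
    have h3 := Real.sin_sq_add_cos_sq (ξ/2)
    have hsin : Real.sin ξ = 2 * Real.sin (ξ/2) * Real.cos (ξ/2) := by
      conv_lhs => rw [show ξ = 2*(ξ/2) by ring]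
      rw [Real.sin_two_mul]
    have habs : |Real.sin ξ / 2| = Real.sin (ξ/2) * Real.cos (ξ/2) := by
      rw [hsin, abs_of_nonneg (by positivity)]; ring
    have e1 : f ξ ^ (q-1/2) = Real.sin (ξ/2) ^ (2*q-1) := by
      simp only [hf]
      rw [← Real.rpow_natCast (Real.sin (ξ/2)) 2, ← Real.rpow_mul h1.le]
      congr 1; push_cast; ring
    have e2 : (1 - f ξ) ^ (q-1/2) = Real.cos (ξ/2) ^ (2*q-1) := by
      have h4 : 1 - f ξ = Real.cos (ξ/2)^2 := by simp only [hf]; nlinarith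
      rw [h4, ← Real.rpow_natCast (Real.cos (ξ/2)) 2, ← Real.rpow_mul h2.le]
      congr 1; push_cast; ring
    rw [smul_eq_mul, habs, e1, e2]
    have e3 : Real.sin (ξ/2) * Real.cos (ξ/2) * (Real.sin (ξ/2) ^ (2*q-1) * Real.cos (ξ/2) ^ (2*q-1))
        = (Real.sin (ξ/2)^(2*q-1) * Real.sin (ξ/2)) * (Real.cos (ξ/2)^(2*q-1) * Real.cos (ξ/2)) := by ring
    rw [e3, ← Real.rpow_add_one h1.ne', ← Real.rpow_add_one h2.ne',
      show 2*q-1+1 = 2*q by ring, ← Real.mul_rpow h1.le h2.le]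
    have e4 : Real.sin ξ ^ (2*q) = (2:ℝ)^(2*q) * (Real.sin (ξ/2)*Real.cos (ξ/2))^(2*q) := by
      rw [hsin, show 2*Real.sin (ξ/2)*Real.cos (ξ/2) = 2*(Real.sin (ξ/2)*Real.cos (ξ/2)) by ring,
        Real.mul_rpow (by norm_num) (by positivity)]
    rw [e4, h45]
    field_simp
  rw [MeasureTheory.setIntegral_congr_fun measurableSet_Ioo hcongr] at hsub
  have hL : ∫ x in Ioo (0:ℝ) 1, x^(q-1/2)*(1-x)^(q-1/2)
      = Real.Gamma (q+1/2) * Real.Gamma (q+1/2) / Real.Gamma (2*q+1) := by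
    rw [← MeasureTheory.integral_Ioc_eq_integral_Ioo,
      ← intervalIntegral.integral_of_le (by norm_num : (0:ℝ) ≤ 1)]
    have := realBeta (a := q+1/2) (b := q+1/2) (by linarith) (by linarith)
    rw [show q+1/2-1 = q-1/2 by ring, show q+1/2+(q+1/2) = 2*q+1 by ring] at this
    exact this
  have hR : ∫ ξ in Ioo (0:ℝ) π, Real.sin ξ ^ (2*q) / (4:ℝ)^q
      = (∫ ξ in (0:ℝ)..π, Real.sin ξ ^ (2*q)) / (4:ℝ)^q := by
    rw [intervalIntegral.integral_of_le (le_of_lt Real.pi_pos),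
      MeasureTheory.integral_Ioc_eq_integral_Ioo, MeasureTheory.integral_div]
  rw [hL, hR] at hsub
  have h4pos : (0:ℝ) < (4:ℝ)^q := Real.rpow_pos_of_pos (by norm_num) q
  have hGa : 0 < Real.Gamma (q+1/2) := Real.Gamma_pos_of_pos (by linarith)
  have hGb : 0 < Real.Gamma (q+1) := Real.Gamma_pos_of_pos (by linarith)
  have hGc : 0 < Real.Gamma (2*q+1) := Real.Gamma_pos_of_pos (by linarith)
  have hπ : 0 < Real.sqrt π := Real.sqrt_pos.mpr Real.pi_pos
  have hdup := Real.Gamma_mul_Gamma_add_half (q+1/2)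
  rw [show q+1/2+1/2 = q+1 by ring, show 2*(q+1/2) = 2*q+1 by ring] at hdup
  rw [show (1:ℝ)-(2*q+1) = -(2*q) by ring] at hdup
  have h2 : (2:ℝ)^(-(2*q)) = ((4:ℝ)^q)⁻¹ := by
    rw [Real.rpow_neg (by norm_num), h45]
  rw [h2] at hdup
  -- hdup : Γ(q+1/2)*Γ(q+1) = Γ(2q+1) * (4^q)⁻¹ * √π
  -- hsub : Γa*Γa/Γc = W/4^q
  have hW : (∫ ξ in (0:ℝ)..π, Real.sin ξ ^ (2*q))
      = (4:ℝ)^q * (Real.Gamma (q+1/2) * Real.Gamma (q+1/2)) / Real.Gamma (2*q+1) := by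
    field_simp at hsub ⊢
    linarith
  rw [hW]
  have hGc' : Real.Gamma (2*q+1) = Real.Gamma (q+1/2) * Real.Gamma (q+1) * (4:ℝ)^q / Real.sqrt π := by
    field_simp at hdup ⊢
    linarith
  rw [hGc']
  field_simp

open Set intervalIntegral in
/-- For real `q ≥ 0` and `0 ≤ ρ < 1`,
`∫₀^π sin^{2q} ξ / (1 + ρ² − 2ρ cos ξ)^{q+1} dξ = (1/(1−ρ²)) √π Γ(q+1/2)/Γ(q+1)`. -/
theorem landkof_type_integral (q ρ : ℝ) (hq : 0 ≤ q) (hρ0 : 0 ≤ ρ) (hρ1 : ρ < 1) :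
    (∫ ξ in (0:ℝ)..π, Real.sin ξ ^ (2*q) / (1 + ρ^2 - 2*ρ*Real.cos ξ) ^ (q + 1))
      = 1 / (1 - ρ^2) * (Real.sqrt π * Real.Gamma (q + 1/2) / Real.Gamma (q + 1)) := by
  rcases hρ0.eq_or_lt with h0 | h0
  · subst h0
    simp only [ne_eq, OfNat.ofNat_ne_zero, not_false_eq_true, zero_pow, add_zero, zero_mul,
      mul_zero, sub_zero, Real.one_rpow, div_one]
    rw [wallis_rpow hq]
    norm_num
  -- now 0 < ρ
  set D : ℝ → ℝ := fun ξ => 1 + ρ^2 - 2*ρ*Real.cos ξ with hDdef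
  have hDpos : ∀ ξ, 0 < D ξ := by
    intro ξ
    have h1 := Real.cos_le_one ξ
    have h2 : 0 ≤ ρ * (1 - Real.cos ξ) := mul_nonneg h0.le (by linarith)
    simp only [hDdef]
    nlinarith [sq_nonneg (1-ρ)]
  have contD : Continuous D := by fun_prop
  have contSin2q : Continuous (fun u : ℝ => Real.sin u ^ (2*q)) := by
    have h : Continuous fun x : ℝ => x ^ (2*q) :=
      continuous_iff_continuousAt.mpr fun x =>
        Real.continuousAt_rpow_const x _ (Or.inr (by positivity))
    exact h.comp Real.continuous_sin
  have contDq : Continuous (fun ξ => D ξ ^ (q+1)) :=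
    continuous_iff_continuousAt.mpr fun x =>
      (Real.continuousAt_rpow_const _ _ (Or.inl (hDpos x).ne')).comp contD.continuousAt
  have contInt : Continuous (fun ξ => Real.sin ξ ^ (2*q) / D ξ ^ (q+1)) :=
    contSin2q.div contDq (fun x => (Real.rpow_pos_of_pos (hDpos x) _).ne')
  set S : ℝ → ℝ := fun t => ∫ u in (0:ℝ)..t, Real.sin u ^ (2*q) with hSdef
  have contS : Continuous S :=
    intervalIntegral.continuous_primitive (fun a b => contSin2q.intervalIntegrable a b) 0
  have derivS : ∀ t, HasDerivAt S (Real.sin t ^ (2*q)) t := fun t =>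
    intervalIntegral.integral_hasDerivAt_right (contSin2q.intervalIntegrable _ _)
      (contSin2q.stronglyMeasurableAtFilter _ _) contSin2q.continuousAt
  have hS0 : S 0 = 0 := intervalIntegral.integral_same
  set θ : ℝ → ℝ := fun ξ => Real.arccos ((Real.cos ξ - ρ)/Real.sqrt (D ξ)) with hθdef
  set φ : ℝ → ℝ := fun ξ => Real.arccos ((1 - ρ*Real.cos ξ)/Real.sqrt (D ξ)) with hφdef
  have hsqrtDpos : ∀ ξ, 0 < Real.sqrt (D ξ) := fun ξ => Real.sqrt_pos.mpr (hDpos ξ)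
  have contθ : Continuous θ :=
    Real.continuous_arccos.comp <|
      ((Real.continuous_cos.sub continuous_const).div (contD.sqrt)
        (fun x => (hsqrtDpos x).ne'))
  have contφ : Continuous φ :=
    Real.continuous_arccos.comp <|
      ((continuous_const.sub (continuous_const.mul Real.continuous_cos)).div (contD.sqrt)
        (fun x => (hsqrtDpos x).ne'))
  have hD0 : D 0 = (1-ρ)^2 := by simp only [hDdef, Real.cos_zero]; ring
  have hDπ : D π = (1+ρ)^2 := by simp only [hDdef, Real.cos_pi]; ring
  have hθ0 : θ 0 = 0 := by
    simp only [hθdef, hD0, Real.cos_zero, Real.sqrt_sq (by linarith : (0:ℝ) ≤ 1-ρ)]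
    rw [div_self (by linarith : (1:ℝ)-ρ ≠ 0), Real.arccos_one]
  have hθπ : θ π = π := by
    simp only [hθdef, hDπ, Real.cos_pi, Real.sqrt_sq (by linarith : (0:ℝ) ≤ 1+ρ)]
    rw [show (-1-ρ)/(1+ρ) = -((1+ρ)/(1+ρ)) by ring,
      div_self (by linarith : (1:ℝ)+ρ ≠ 0), Real.arccos_neg_one]
  have hφ0 : φ 0 = 0 := by
    simp only [hφdef, hD0, Real.cos_zero, Real.sqrt_sq (by linarith : (0:ℝ) ≤ 1-ρ), mul_one]
    rw [div_self (by linarith : (1:ℝ)-ρ ≠ 0), Real.arccos_one]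
  have hφπ : φ π = 0 := by
    simp only [hφdef, hDπ, Real.cos_pi, Real.sqrt_sq (by linarith : (0:ℝ) ≤ 1+ρ), mul_neg_one]
    rw [show (1:ℝ) - -ρ = 1+ρ by ring, div_self (by linarith : (1:ℝ)+ρ ≠ 0), Real.arccos_one]
  -- derivative facts on the interior
  have key : ∀ ξ ∈ Ioo (0:ℝ) π,
      HasDerivAt θ ((1 - ρ*Real.cos ξ)/D ξ) ξ ∧
      HasDerivAt φ (ρ*(Real.cos ξ - ρ)/D ξ) ξ ∧
      Real.sin (θ ξ) = Real.sin ξ / Real.sqrt (D ξ) ∧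
      Real.sin (φ ξ) = ρ * Real.sin ξ / Real.sqrt (D ξ) := by
    intro ξ hξ
    have hsξ : 0 < Real.sin ξ := Real.sin_pos_of_pos_of_lt_pi hξ.1 hξ.2
    set s : ℝ := Real.sqrt (D ξ) with hsdef
    have hs : 0 < s := hsqrtDpos ξ
    have hs2 : s^2 = 1 + ρ^2 - 2*ρ*Real.cos ξ := Real.sq_sqrt (hDpos ξ).le
    have htrig := Real.sin_sq_add_cos_sq ξ
    have hDs : D ξ = s^2 := by rw [hs2]
    -- derivative of D and sqrt ∘ D
    have hD' : HasDerivAt D (2*ρ*Real.sin ξ) ξ := by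
      have h := ((Real.hasDerivAt_cos ξ).const_mul (2*ρ)).const_sub (1+ρ^2)
      refine h.congr_deriv ?_
      ring
    have hsqrtD' : HasDerivAt (fun u => Real.sqrt (D u)) (1/(2*s) * (2*ρ*Real.sin ξ)) ξ :=
      (Real.hasDerivAt_sqrt (hDpos ξ).ne').comp ξ hD'
    -- θ part
    have hgθ1 : 1 - ((Real.cos ξ - ρ)/s)^2 = (Real.sin ξ/s)^2 := by
      field_simp
      linear_combination hs2 - htrig
    have hsqθ : Real.sqrt (1 - ((Real.cos ξ - ρ)/s)^2) = Real.sin ξ/s := by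
      rw [hgθ1, Real.sqrt_sq (by positivity)]
    have hgθlt : ((Real.cos ξ - ρ)/s)^2 < 1 := by
      have : 0 < (Real.sin ξ/s)^2 := by positivity
      linarith [hgθ1]
    have hgθne1 : (Real.cos ξ - ρ)/s ≠ 1 := by
      intro h; rw [h] at hgθlt; norm_num at hgθlt
    have hgθnem1 : (Real.cos ξ - ρ)/s ≠ -1 := by
      intro h; rw [h] at hgθlt; norm_num at hgθlt
    have hnumθ : HasDerivAt (fun u => Real.cos u - ρ) (-Real.sin ξ) ξ :=
      (Real.hasDerivAt_cos ξ).sub_const ρ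
    have hquotθ : HasDerivAt (fun u => (Real.cos u - ρ)/Real.sqrt (D u))
        ((-Real.sin ξ * s - (Real.cos ξ - ρ) * (1/(2*s) * (2*ρ*Real.sin ξ)))/s^2) ξ :=
      hnumθ.div hsqrtD' hs.ne'
    have hθd : HasDerivAt θ ((1 - ρ*Real.cos ξ)/D ξ) ξ := by
      have h := (Real.hasDerivAt_arccos hgθnem1 hgθne1).comp ξ hquotθ
      have hval : -(1/Real.sqrt (1 - ((Real.cos ξ - ρ)/s)^2)) *
          ((-Real.sin ξ * s - (Real.cos ξ - ρ) * (1/(2*s) * (2*ρ*Real.sin ξ)))/s^2)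
          = (1 - ρ*Real.cos ξ)/D ξ := by
        rw [hsqθ]
        have k1 : -Real.sin ξ * s - (Real.cos ξ - ρ) * (1/(2*s) * (2*ρ*Real.sin ξ))
            = -(Real.sin ξ/s) * (s^2 + ρ*(Real.cos ξ - ρ)) := by
          field_simp
          ring
        have k2 : s^2 + ρ*(Real.cos ξ - ρ) = 1 - ρ*Real.cos ξ := by
          rw [hs2]; ring
        rw [k1, k2, hDs]
        field_simp
      rw [← hval]
      exact h
    -- φ part
    have hgφ1 : 1 - ((1 - ρ*Real.cos ξ)/s)^2 = (ρ*Real.sin ξ/s)^2 := by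
      field_simp
      linear_combination hs2 - ρ^2 * htrig
    have hsqφ : Real.sqrt (1 - ((1 - ρ*Real.cos ξ)/s)^2) = ρ*Real.sin ξ/s := by
      rw [hgφ1, Real.sqrt_sq (by positivity)]
    have hgφlt : ((1 - ρ*Real.cos ξ)/s)^2 < 1 := by
      have : 0 < (ρ*Real.sin ξ/s)^2 := by positivity
      linarith [hgφ1]
    have hgφne1 : (1 - ρ*Real.cos ξ)/s ≠ 1 := by
      intro h; rw [h] at hgφlt; norm_num at hgφlt
    have hgφnem1 : (1 - ρ*Real.cos ξ)/s ≠ -1 := by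
      intro h; rw [h] at hgφlt; norm_num at hgφlt
    have hnumφ : HasDerivAt (fun u => 1 - ρ*Real.cos u) (ρ*Real.sin ξ) ξ := by
      have h := ((Real.hasDerivAt_cos ξ).const_mul ρ).const_sub 1
      refine h.congr_deriv ?_
      ring
    have hquotφ : HasDerivAt (fun u => (1 - ρ*Real.cos u)/Real.sqrt (D u))
        ((ρ*Real.sin ξ * s - (1 - ρ*Real.cos ξ) * (1/(2*s) * (2*ρ*Real.sin ξ)))/s^2) ξ :=
      hnumφ.div hsqrtD' hs.ne'
    have hφd : HasDerivAt φ (ρ*(Real.cos ξ - ρ)/D ξ) ξ := by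
      have h := (Real.hasDerivAt_arccos hgφnem1 hgφne1).comp ξ hquotφ
      have hval : -(1/Real.sqrt (1 - ((1 - ρ*Real.cos ξ)/s)^2)) *
          ((ρ*Real.sin ξ * s - (1 - ρ*Real.cos ξ) * (1/(2*s) * (2*ρ*Real.sin ξ)))/s^2)
          = ρ*(Real.cos ξ - ρ)/D ξ := by
        rw [hsqφ]
        have k1 : ρ*Real.sin ξ * s - (1 - ρ*Real.cos ξ) * (1/(2*s) * (2*ρ*Real.sin ξ))
            = (ρ*Real.sin ξ/s) * (s^2 - (1 - ρ*Real.cos ξ)) := by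
          field_simp
        have k2 : s^2 - (1 - ρ*Real.cos ξ) = -(ρ*(Real.cos ξ - ρ)) := by
          rw [hs2]; ring
        rw [k1, k2, hDs]
        field_simp
      rw [← hval]
      exact h
    refine ⟨hθd, hφd, ?_, ?_⟩
    · simp only [hθdef]
      rw [Real.sin_arccos, hsqθ]
    · simp only [hφdef]
      rw [Real.sin_arccos, hsqφ]
  -- the antiderivative
  set H : ℝ → ℝ := fun ξ => S (θ ξ) + ρ^(-(2*q)) * S (φ ξ) with hHdef
  have hHcont : ContinuousOn H (Icc 0 π) :=
    (((contS.comp contθ).add (continuous_const.mul (contS.comp contφ)))).continuousOn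
  have hHd : ∀ ξ ∈ Ioo (0:ℝ) π,
      HasDerivAt H ((1-ρ^2) * (Real.sin ξ ^ (2*q) / D ξ ^ (q+1))) ξ := by
    intro ξ hξ
    obtain ⟨hθd, hφd, hsθ, hsφ⟩ := key ξ hξ
    have hsξ : 0 < Real.sin ξ := Real.sin_pos_of_pos_of_lt_pi hξ.1 hξ.2
    have h1 : HasDerivAt (fun u => S (θ u))
        (Real.sin (θ ξ) ^ (2*q) * ((1 - ρ*Real.cos ξ)/D ξ)) ξ :=
      (derivS (θ ξ)).comp ξ hθd
    have h2 : HasDerivAt (fun u => ρ^(-(2*q)) * S (φ u))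
        (ρ^(-(2*q)) * (Real.sin (φ ξ) ^ (2*q) * (ρ*(Real.cos ξ - ρ)/D ξ))) ξ :=
      ((derivS (φ ξ)).comp ξ hφd).const_mul _
    have h3 := h1.add h2
    have hval : Real.sin (θ ξ) ^ (2*q) * ((1 - ρ*Real.cos ξ)/D ξ)
        + ρ^(-(2*q)) * (Real.sin (φ ξ) ^ (2*q) * (ρ*(Real.cos ξ - ρ)/D ξ))
        = (1-ρ^2) * (Real.sin ξ ^ (2*q) / D ξ ^ (q+1)) := by
      rw [hsθ, hsφ]
      have hsq2q : Real.sqrt (D ξ) ^ (2*q) = D ξ ^ q := by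
        rw [Real.sqrt_eq_rpow, ← Real.rpow_mul (hDpos ξ).le]
        congr 1
        ring
      have e1 : (Real.sin ξ / Real.sqrt (D ξ)) ^ (2*q)
          = Real.sin ξ ^ (2*q) / D ξ ^ q := by
        rw [Real.div_rpow hsξ.le (hsqrtDpos ξ).le, hsq2q]
      have e2 : (ρ * Real.sin ξ / Real.sqrt (D ξ)) ^ (2*q)
          = ρ^(2*q) * Real.sin ξ ^ (2*q) / D ξ ^ q := by
        rw [Real.div_rpow (by positivity) (hsqrtDpos ξ).le, Real.mul_rpow h0.le hsξ.le, hsq2q]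
      have e3 : ρ^(-(2*q)) * ρ^(2*q) = 1 := by
        rw [← Real.rpow_add h0]
        norm_num
      have e4 : D ξ ^ (q+1) = D ξ ^ q * D ξ := Real.rpow_add_one (hDpos ξ).ne' q
      have hDq : (D ξ ^ q) ≠ 0 := (Real.rpow_pos_of_pos (hDpos ξ) q).ne'
      have hDne : D ξ ≠ 0 := (hDpos ξ).ne'
      rw [e1, e2, e4,
        show ρ^(-(2*q)) * (ρ^(2*q) * Real.sin ξ^(2*q) / D ξ^q * (ρ*(Real.cos ξ-ρ)/D ξ))
           = (ρ^(-(2*q)) * ρ^(2*q)) * (Real.sin ξ^(2*q) / D ξ^q * (ρ*(Real.cos ξ-ρ)/D ξ)) by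
          ring,
        e3, one_mul]
      field_simp
      ring
    rw [← hval]
    exact h3
  have hint : IntervalIntegrable
      (fun ξ => (1-ρ^2) * (Real.sin ξ ^ (2*q) / D ξ ^ (q+1))) volume 0 π :=
    (continuous_const.mul contInt).intervalIntegrable 0 π
  have hFTC := intervalIntegral.integral_eq_sub_of_hasDerivAt_of_le
    Real.pi_pos.le hHcont hHd hint
  have hHπ : H π = S π := by
    simp only [hHdef]
    rw [hθπ, hφπ, hS0, mul_zero, add_zero]
  have hH0 : H 0 = 0 := by
    simp only [hHdef]
    rw [hθ0, hφ0, hS0, mul_zero, add_zero]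
  rw [hHπ, hH0, sub_zero, intervalIntegral.integral_const_mul] at hFTC
  have hSπ : S π = Real.sqrt π * Real.Gamma (q+1/2) / Real.Gamma (q+1) := wallis_rpow hq
  have hρ2 : (1:ℝ) - ρ^2 ≠ 0 := by nlinarith
  rw [hSπ] at hFTC
  rw [← hFTC]
  field_simp
  rfl
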